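/- The extendible hom-algebra (V ⊕ V*, ·, Φ) is hom-left-symmetric if and only if ρ(u,α) = 0 and ρ*(α,u) = 0 for all u ∈ V, α ∈ V*. -/

import Mathlib

set_option maxHeartbeats 1000000

theorem aux18 {V W : Type*} [AddCommGroup V] [Module ℝ V] [AddCommGroup W] [Module ℝ W]
    (p : W →ₗ[ℝ] V →ₗ[ℝ] ℝ)
    (hpV : ∀ v : V, (∀ α : W, p α v = 0) → v = 0)
    (mV : V →ₗ[ℝ] V →ₗ[ℝ] V) (fV : V →ₗ[ℝ] V)
    (hVls : ∀ u v w : V,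
      mV (mV u v) (fV w) - mV (fV u) (mV v w) = mV (mV v u) (fV w) - mV (fV v) (mV u w))
    (mW : W →ₗ[ℝ] W →ₗ[ℝ] W) (fW : W →ₗ[ℝ] W)
    (hfW : ∀ α β : W, fW (mW α β) = mW (fW α) (fW β))
    (hfWinv : ∀ α : W, fW (fW α) = α)
    (hWls : ∀ α β γ : W,
      mW (mW α β) (fW γ) - mW (fW α) (mW β γ) = mW (mW β α) (fW γ) - mW (fW β) (mW α γ))
    (hdual : ∀ (α : W) (v : V), p (fW α) v = p α (fV v))
    (Lt : W →ₗ[ℝ] V →ₗ[ℝ] V)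
    (hLt : ∀ (α : W) (v : V) (β : W), p β (Lt α v) = p (mW α β) v)
    (Ltw : V →ₗ[ℝ] W →ₗ[ℝ] W)
    (u v w : V) (α β : W) :
    (mV (mV u v) (fV w) - mV (Lt (fW α) v) (fV w) - Lt (fW (mW α β)) (fV w)
        + Lt (fW (Ltw (fV u) β)) (fV w)
      - (mV (fV u) (mV v w) - mV (fV u) (Lt (fW β) w) - Lt α (mV v w) + Lt α (Lt (fW β) w)))
    - (mV (mV v u) (fV w) - mV (Lt (fW β) u) (fV w) - Lt (fW (mW β α)) (fV w)
        + Lt (fW (Ltw (fV v) α)) (fV w)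
      - (mV (fV v) (mV u w) - mV (fV v) (Lt (fW α) w) - Lt β (mV u w) + Lt β (Lt (fW α) w)))
    = (- mV (fV v) (Lt (fW α) w) + Lt α (mV v w) - fV (Lt (Ltw (fV v) α) w)
        - mV (Lt (fW α) v) (fV w))
      - (- mV (fV u) (Lt (fW β) w) + Lt β (mV u w) - fV (Lt (Ltw (fV u) β) w)
        - mV (Lt (fW β) u) (fV w)) := by
  rw [← sub_eq_zero]
  refine hpV _ fun δ => ?_
  have hv := congrArg (p δ) (hVls u v w)
  have hw := congrArg (fun t => p t w) (hWls α β δ)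
  simp only [map_sub] at hv
  simp only [map_sub, LinearMap.sub_apply] at hw
  simp only [map_sub, map_add, map_neg, hLt, hfW, hfWinv, ← hdual]
  linarith [hv, hw]

theorem extendible_leftSymmetric_iff {V W : Type*} [AddCommGroup V] [Module ℝ V] [AddCommGroup W] [Module ℝ W]
    -- duality pairing between W (= V*) and V
    (p : W →ₗ[ℝ] V →ₗ[ℝ] ℝ)
    (hpV : ∀ v : V, (∀ α : W, p α v = 0) → v = 0)
    (hpW : ∀ α : W, (∀ v : V, p α v = 0) → α = 0)
    -- involutive hom-left-symmetric algebra (V, ·, φ)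
    (mV : V →ₗ[ℝ] V →ₗ[ℝ] V) (fV : V →ₗ[ℝ] V)
    (hfV : ∀ u v : V, fV (mV u v) = mV (fV u) (fV v))
    (hfVinv : ∀ u : V, fV (fV u) = u)
    (hVls : ∀ u v w : V,
      mV (mV u v) (fV w) - mV (fV u) (mV v w) = mV (mV v u) (fV w) - mV (fV v) (mV u w))
    -- involutive hom-left-symmetric algebra (V*, ·, φ*)
    (mW : W →ₗ[ℝ] W →ₗ[ℝ] W) (fW : W →ₗ[ℝ] W)
    (hfW : ∀ α β : W, fW (mW α β) = mW (fW α) (fW β))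
    (hfWinv : ∀ α : W, fW (fW α) = α)
    (hWls : ∀ α β γ : W,
      mW (mW α β) (fW γ) - mW (fW α) (mW β γ) = mW (mW β α) (fW γ) - mW (fW β) (mW α γ))
    -- φ* = φᵗ
    (hdual : ∀ (α : W) (v : V), p (fW α) v = p α (fV v))
    -- transposes of the left multiplications: Lᵗ_α : V → V and Lᵗ_u : W → W
    (Lt : W →ₗ[ℝ] V →ₗ[ℝ] V)
    (hLt : ∀ (α : W) (v : V) (β : W), p β (Lt α v) = p (mW α β) v)
    (Ltw : V →ₗ[ℝ] W →ₗ[ℝ] W)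
    (hLtw : ∀ (u : V) (β : W) (v : V), p (Ltw u β) v = p β (mV u v))
    -- the extended product and morphism on V ⊕ V*
    (M : V × W → V × W → V × W)
    (hM : ∀ x y : V × W,
      M x y = (mV x.1 y.1 - Lt (fW x.2) y.1, mW x.2 y.2 - Ltw (fV x.1) y.2))
    (Φ : V × W → V × W)
    (hΦ : ∀ x : V × W, Φ x = (fV x.1, fW x.2))
    (ρ : V → W → V → V)
    (hρ : ∀ (u : V) (α : W) (v : V),
      ρ u α v = - mV (fV u) (Lt (fW α) v) + Lt α (mV u v)
        - fV (Lt (Ltw (fV u) α) v) - mV (Lt (fW α) u) (fV v))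
    (ρs : W → V → W → W)
    (hρs : ∀ (α : W) (u : V) (β : W),
      ρs α u β = - mW (fW α) (Ltw (fV u) β) + Ltw u (mW α β)
        - fW (Ltw (Lt (fW α) u) β) - mW (Ltw (fV u) α) (fW β)) :
    (∀ x y z : V × W,
      M (M x y) (Φ z) - M (Φ x) (M y z) = M (M y x) (Φ z) - M (Φ y) (M x z)) ↔
    ((∀ (u : V) (α : W) (v : V), ρ u α v = 0) ∧
     (∀ (α : W) (u : V) (β : W), ρs α u β = 0)) := by
  have h1 := aux18 p hpV mV fV hVls mW fW hfW hfWinv hWls hdual Lt hLt Ltw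
  have h2 := aux18 (V := W) (W := V) p.flip
      (fun βx h => hpW βx fun v => h v)
      mW fW hWls mV fV hfV hfVinv hVls
      (fun a β => by simp only [LinearMap.flip_apply]; exact (hdual β a).symm)
      Ltw (fun a β b => by simp only [LinearMap.flip_apply]; exact hLtw a β b)
      Lt
  have main : ∀ (u v w : V) (α β γ : W),
      (M (M (u, α) (v, β)) (Φ (w, γ)) - M (Φ (u, α)) (M (v, β) (w, γ))) -
      (M (M (v, β) (u, α)) (Φ (w, γ)) - M (Φ (v, β)) (M (u, α) (w, γ))) =
      (ρ v α w - ρ u β w, ρs β u γ - ρs α v γ) := by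
    intro u v w α β γ
    simp only [hM, hΦ, hρ, hρs]
    simp only [Prod.mk_sub_mk, Prod.mk.injEq]
    constructor
    · have := h1 u v w α β
      simp only [map_sub, LinearMap.sub_apply, hfWinv, hfVinv] at this ⊢
      abel_nf at this ⊢
      exact this
    · have := h2 α β γ u v
      simp only [LinearMap.flip_apply, map_sub, LinearMap.sub_apply, hfWinv, hfVinv] at this ⊢
      abel_nf at this ⊢
      exact this
  constructor
  · intro H
    have hρ0 : ∀ v : V, ρ 0 0 v = 0 := by intro v; rw [hρ]; simp
    have hρs0 : ∀ β : W, ρs 0 0 β = 0 := by intro β; rw [hρs]; simp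
    constructor
    · intro u α v
      have h := main 0 u v α 0 0
      rw [sub_eq_zero.mpr (H (0, α) (u, 0) (v, 0))] at h
      have := congrArg Prod.fst h.symm
      simp only [hρ0] at this
      simpa using this
    · intro α u β
      have h := main u 0 0 0 α β
      rw [sub_eq_zero.mpr (H (u, 0) (0, α) (0, β))] at h
      have := congrArg Prod.snd h.symm
      simp only [hρs0] at this
      simpa using this
  · rintro ⟨hr, hrs⟩ x y z
    have h := main x.1 y.1 z.1 x.2 y.2 z.2
    rw [hr y.1 x.2 z.1, hr x.1 y.2 z.1, hrs y.2 x.1 z.2, hrs x.2 y.1 z.2] at h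
    simp only [Prod.mk.eta, sub_zero, sub_self] at h
    exact sub_eq_zero.mp (by rw [h]; rfl)
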